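/- Let d ≥ 2, let K_1 = {x ∈ ℝ^d : x_1 = 0}, and let K_2 = {x ∈ ℝ^d : ∑_i a_i x_i = c} where a = (a_1, …, a_d) ∈ ℤ^d is a primitive integer vector with (a_2, …, a_d) ≠ 0 and c ∈ ℤ. Then the intersection φ(K_1) ∩ φ(K_2) of the two corresponding subtori in T^d = ℝ^d/ℤ^d has exactly gcd(a_2, …, a_d) connected components. -/

import Mathlib

open scoped BigOperators

noncomputable section

/-- The flat `d`-dimensional torus `ℝ^d / ℤ^d`, modeled as a product of circles `ℝ/ℤ`. -/
abbrev FlatTorus (d : ℕ) := Fin d → AddCircle (1 : ℝ)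

/-- The quotient map `φ : ℝ^d → T^d`. -/
def torusQuot (d : ℕ) : (Fin d → ℝ) → FlatTorus d := fun x i => (x i : AddCircle (1 : ℝ))

/-- A closed codimension-one subtorus of `T^d`: the image under `φ` of an affine hyperplane
`{x | ∑ i, a i * x i = c}` with `a` a primitive integer vector. -/
def IsCodimOneSubtorus {d : ℕ} (A : Set (FlatTorus d)) : Prop :=
  ∃ (a : Fin d → ℤ) (c : ℝ),
    Finset.univ.gcd a = 1 ∧
    A = torusQuot d '' {x | ∑ i, (a i : ℝ) * x i = c}

/-! ### Auxiliary lemmas -/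

section Aux

/-- Bézout's lemma for finite families of integers. -/
lemma finsetBezout {ι : Type*} (s : Finset ι) (f : ι → ℤ) :
    ∃ n : ι → ℤ, ∑ i ∈ s, f i * n i = s.gcd f := by
  classical
  induction s using Finset.induction with
  | empty => exact ⟨0, by simp⟩
  | @insert a s hb ih =>
    obtain ⟨n, hn⟩ := ih
    obtain ⟨x, y, hxy⟩ := exists_gcd_eq_mul_add_mul (f a) (s.gcd f)
    refine ⟨Function.update (fun i => n i * y) a x, ?_⟩
    rw [Finset.gcd_insert, Finset.sum_insert hb, hxy, Function.update_self]
    congr 1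
    rw [← hn, Finset.sum_mul]
    apply Finset.sum_congr rfl
    intro i hi
    rw [Function.update_of_ne (by rintro rfl; exact hb hi), mul_assoc]

lemma intCoe_eq_zero (m : ℤ) : ((m : ℝ) : AddCircle (1:ℝ)) = 0 := by
  rw [AddCircle.coe_eq_zero_iff]; exact ⟨m, by simp⟩

lemma zsmul_coe (m : ℤ) (r : ℝ) :
    m • ((r : ℝ) : AddCircle (1:ℝ)) = (((m : ℝ) * r : ℝ) : AddCircle (1:ℝ)) := by
  rw [← zsmul_eq_mul]
  exact (map_zsmul (QuotientAddGroup.mk' (AddSubgroup.zmultiples (1:ℝ))) _ _).symm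

lemma coe_sum_mul {ι : Type*} (s : Finset ι) (f : ι → ℤ) (x : ι → ℝ) :
    ((∑ i ∈ s, (f i : ℝ) * x i : ℝ) : AddCircle (1:ℝ))
      = ∑ i ∈ s, f i • ((x i : ℝ) : AddCircle (1:ℝ)) := by
  have : ((∑ i ∈ s, (f i : ℝ) * x i : ℝ) : AddCircle (1:ℝ))
      = QuotientAddGroup.mk' _ (∑ i ∈ s, (f i : ℝ) * x i) := rfl
  rw [this, map_sum]
  apply Finset.sum_congr rfl
  intro i _
  rw [← zsmul_eq_mul, map_zsmul]
  rfl

/-- The `k`-th `n`-torsion point of the circle. -/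
noncomputable def torsionPt (n : ℕ) (k : ℕ) : AddCircle (1:ℝ) := ((k : ℝ) / n : ℝ)

lemma torsionPt_mem (n : ℕ) (hn : 0 < n) (k : ℕ) : (n : ℤ) • torsionPt n k = 0 := by
  rw [torsionPt, zsmul_coe]
  have h1 : ((n:ℤ):ℝ) * ((k:ℝ)/n) = ((k:ℤ):ℝ) := by
    push_cast
    field_simp
  rw [h1, intCoe_eq_zero]

lemma torsion_surj (n : ℕ) (hn : 0 < n) (t : AddCircle (1:ℝ)) (ht : (n : ℤ) • t = 0) :
    ∃ k : Fin n, torsionPt n k = t := by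
  set x : ℝ := (AddCircle.equivIco 1 0 t : ℝ) with hxdef
  have hmem : x ∈ Set.Ico (0:ℝ) (0 + 1) := (AddCircle.equivIco 1 0 t).2
  have hx : (x : AddCircle (1:ℝ)) = t := (AddCircle.equivIco 1 0).symm_apply_apply t
  have h1 : ((((n:ℤ):ℝ) * x : ℝ) : AddCircle (1:ℝ)) = 0 := by
    rw [← zsmul_coe, hx, ht]
  rw [AddCircle.coe_eq_zero_iff] at h1
  obtain ⟨m, hm⟩ := h1
  rw [zsmul_eq_mul, mul_one] at hm
  push_cast at hm
  have hx0 : 0 ≤ x := hmem.1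
  have hx1 : x < 1 := by simpa using hmem.2
  have hnR : (0:ℝ) < (n:ℝ) := by exact_mod_cast hn
  have hmn : 0 ≤ m ∧ m < n := by
    constructor
    · by_contra h
      push_neg at h
      have : (m:ℝ) < 0 := by exact_mod_cast h
      nlinarith
    · by_contra h
      push_neg at h
      have : (n:ℝ) ≤ (m:ℝ) := by exact_mod_cast h
      nlinarith
  have hmt : ((m.toNat : ℕ) : ℝ) = (n:ℝ) * x := by
    rw [← hm]
    exact_mod_cast congrArg (Int.cast : ℤ → ℝ) (Int.toNat_of_nonneg hmn.1)
  refine ⟨⟨m.toNat, by omega⟩, ?_⟩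
  rw [← hx]
  unfold torsionPt
  congr 1
  show ((m.toNat : ℕ) : ℝ) / (n:ℝ) = x
  rw [div_eq_iff hnR.ne', hmt, mul_comm]

lemma torsion_inj (n : ℕ) (hn : 0 < n) (k j : Fin n) (h : torsionPt n k = torsionPt n j) :
    k = j := by
  unfold torsionPt at h
  have hn' : (0:ℝ) < n := by exact_mod_cast hn
  have hk : ((k:ℕ):ℝ)/n ∈ Set.Ico (0:ℝ) (0+1) := by
    refine ⟨by positivity, ?_⟩
    rw [zero_add, div_lt_one hn']
    exact_mod_cast k.2
  have hj : ((j:ℕ):ℝ)/n ∈ Set.Ico (0:ℝ) (0+1) := by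
    refine ⟨by positivity, ?_⟩
    rw [zero_add, div_lt_one hn']
    exact_mod_cast j.2
  rw [AddCircle.coe_eq_coe_iff_of_mem_Ico hk hj, div_eq_div_iff hn'.ne' hn'.ne'] at h
  have h2 : ((k:ℕ):ℝ) = ((j:ℕ):ℝ) := mul_right_cancel₀ hn'.ne' h
  have : (k:ℕ) = (j:ℕ) := by exact_mod_cast h2
  exact Fin.ext this

lemma continuous_torusQuot (d : ℕ) : Continuous (torusQuot d) := by
  apply continuous_pi
  intro i
  exact continuous_quotient_mk'.comp (continuous_apply i)

lemma torusQuot_eq_of_int (d : ℕ) (x z : Fin d → ℝ) (h : ∀ i, ∃ m : ℤ, z i = x i + m) :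
    torusQuot d z = torusQuot d x := by
  funext i
  obtain ⟨m, hm⟩ := h i
  show ((z i : ℝ) : AddCircle (1:ℝ)) = ((x i : ℝ) : AddCircle (1:ℝ))
  rw [hm]
  calc ((x i + (m:ℝ) : ℝ) : AddCircle (1:ℝ))
      = ((x i : ℝ) : AddCircle (1:ℝ)) + (((m:ℝ) : ℝ) : AddCircle (1:ℝ)) :=
        map_add (QuotientAddGroup.mk' (AddSubgroup.zmultiples (1:ℝ))) _ _
    _ = ((x i : ℝ) : AddCircle (1:ℝ)) := by rw [intCoe_eq_zero, add_zero]

/-- Description of the intersection of the two subtori as a "level set". -/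
lemma inter_eq (d : ℕ) (i0 : Fin d) (a : Fin d → ℤ) (c : ℤ)
    (ha : Finset.univ.gcd a = 1) :
    (torusQuot d '' {x | x i0 = 0}) ∩
      (torusQuot d '' {x | ∑ i, (a i : ℝ) * x i = (c : ℝ)})
    = {y | y i0 = 0 ∧ ∑ i ∈ Finset.univ.erase i0, a i • y i = 0} := by
  classical
  ext y
  constructor
  · rintro ⟨⟨x1, hx1, hq1⟩, ⟨x2, hx2, hq2⟩⟩
    have hy0 : y i0 = 0 := by
      rw [← hq1]
      show ((x1 i0 : ℝ) : AddCircle (1:ℝ)) = 0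
      rw [hx1]
      exact (QuotientAddGroup.mk' (AddSubgroup.zmultiples (1:ℝ))).map_zero
    refine ⟨hy0, ?_⟩
    have hx2i0 : ∃ m : ℤ, x2 i0 = (m:ℝ) := by
      have h0 : ((x2 i0 : ℝ) : AddCircle (1:ℝ)) = 0 := by
        rw [show ((x2 i0 : ℝ) : AddCircle (1:ℝ)) = y i0 from congrFun hq2 i0, hy0]
      rw [AddCircle.coe_eq_zero_iff] at h0
      obtain ⟨m, hm⟩ := h0
      exact ⟨m, by rw [← hm, zsmul_eq_mul, mul_one]⟩
    obtain ⟨m, hm⟩ := hx2i0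
    have hsum : ∑ i ∈ Finset.univ.erase i0, a i • y i
        = ((∑ i ∈ Finset.univ.erase i0, (a i : ℝ) * x2 i : ℝ) : AddCircle (1:ℝ)) := by
      rw [coe_sum_mul]
      refine Finset.sum_congr rfl fun i _ => ?_
      rw [← congrFun hq2 i]
      rfl
    have h := Finset.add_sum_erase Finset.univ (fun i => (a i:ℝ) * x2 i) (Finset.mem_univ i0)
    rw [hx2, hm] at h
    have hEsum : ∑ i ∈ Finset.univ.erase i0, (a i : ℝ) * x2 i
        = ((c - a i0 * m : ℤ) : ℝ) := by
      push_cast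
      linarith
    rw [hsum, hEsum, intCoe_eq_zero]
  · rintro ⟨hy0, hys⟩
    choose x0 hx0 using fun i => QuotientAddGroup.mk_surjective (y i)
    set x : Fin d → ℝ := Function.update x0 i0 0 with hxdef
    have hxq : torusQuot d x = y := by
      funext i
      by_cases hi : i = i0
      · subst hi
        show ((x i : ℝ) : AddCircle (1:ℝ)) = y i
        rw [hxdef, Function.update_self, hy0]
        exact (QuotientAddGroup.mk' (AddSubgroup.zmultiples (1:ℝ))).map_zero
      · show ((x i : ℝ) : AddCircle (1:ℝ)) = y i
        rw [hxdef, Function.update_of_ne hi]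
        exact hx0 i
    have hsum0 : ((∑ i, (a i:ℝ) * x i : ℝ) : AddCircle (1:ℝ)) = 0 := by
      rw [coe_sum_mul]
      calc ∑ i, a i • ((x i:ℝ) : AddCircle (1:ℝ)) = ∑ i, a i • y i :=
            Finset.sum_congr rfl fun i _ => by rw [show ((x i:ℝ) : AddCircle (1:ℝ)) = y i from congrFun hxq i]
        _ = a i0 • y i0 + ∑ i ∈ Finset.univ.erase i0, a i • y i :=
            (Finset.add_sum_erase _ _ (Finset.mem_univ i0)).symm
        _ = 0 := by rw [hy0, hys, smul_zero, add_zero]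
    rw [AddCircle.coe_eq_zero_iff] at hsum0
    obtain ⟨m, hmm⟩ := hsum0
    rw [zsmul_eq_mul, mul_one] at hmm
    obtain ⟨nv, hnv⟩ := finsetBezout Finset.univ a
    rw [ha] at hnv
    refine ⟨⟨x, by simp [hxdef], hxq⟩, ⟨fun i => x i + ((c - m) * nv i : ℤ), ?_, ?_⟩⟩
    · show ∑ i, (a i:ℝ) * (x i + (((c - m) * nv i : ℤ) : ℝ)) = (c:ℝ)
      have expand : ∀ i, (a i:ℝ) * (x i + (((c - m) * nv i : ℤ) : ℝ))
          = (a i:ℝ) * x i + ((c:ℝ) - (m:ℝ)) * ((a i * nv i : ℤ) : ℝ) := by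
        intro i; push_cast; ring
      rw [Finset.sum_congr rfl fun i _ => expand i, Finset.sum_add_distrib, ← Finset.mul_sum,
        ← hmm]
      have h1 : ∑ i, ((a i * nv i : ℤ) : ℝ) = (1:ℝ) := by
        exact_mod_cast congrArg (Int.cast : ℤ → ℝ) hnv
      rw [h1]
      ring
    · exact (torusQuot_eq_of_int d x _ fun i => ⟨(c - m) * nv i, rfl⟩).trans hxq

/-- Description of the fibers. -/
lemma fiber_eq (d : ℕ) (i0 : Fin d) (b : Fin d → ℤ)
    (hb : (Finset.univ.erase i0).gcd b = 1) (r : ℝ) :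
    {y : FlatTorus d | y i0 = 0 ∧
        ∑ i ∈ Finset.univ.erase i0, b i • y i = ((r : ℝ) : AddCircle (1:ℝ))}
      = torusQuot d '' {x | x i0 = 0 ∧ ∑ i ∈ Finset.univ.erase i0, (b i : ℝ) * x i = r} := by
  classical
  ext y
  constructor
  · rintro ⟨hy0, hys⟩
    choose x0 hx0 using fun i => QuotientAddGroup.mk_surjective (y i)
    set x : Fin d → ℝ := Function.update x0 i0 0 with hxdef
    have hxq : torusQuot d x = y := by
      funext i
      by_cases hi : i = i0
      · subst hi
        show ((x i : ℝ) : AddCircle (1:ℝ)) = y i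
        rw [hxdef, Function.update_self, hy0]
        exact (QuotientAddGroup.mk' (AddSubgroup.zmultiples (1:ℝ))).map_zero
      · show ((x i : ℝ) : AddCircle (1:ℝ)) = y i
        rw [hxdef, Function.update_of_ne hi]
        exact hx0 i
    have hsum1 : ((∑ i ∈ Finset.univ.erase i0, (b i:ℝ) * x i : ℝ) : AddCircle (1:ℝ))
        = ((r : ℝ) : AddCircle (1:ℝ)) := by
      rw [coe_sum_mul]
      rw [Finset.sum_congr rfl fun i _ =>
        (by rw [show ((x i:ℝ) : AddCircle (1:ℝ)) = y i from congrFun hxq i] :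
          b i • ((x i:ℝ) : AddCircle (1:ℝ)) = b i • y i)]
      exact hys
    have hsub : ((∑ i ∈ Finset.univ.erase i0, (b i:ℝ) * x i - r : ℝ) : AddCircle (1:ℝ)) = 0 := by
      calc ((∑ i ∈ Finset.univ.erase i0, (b i:ℝ) * x i - r : ℝ) : AddCircle (1:ℝ))
          = ((∑ i ∈ Finset.univ.erase i0, (b i:ℝ) * x i : ℝ) : AddCircle (1:ℝ))
            - ((r : ℝ) : AddCircle (1:ℝ)) :=
            map_sub (QuotientAddGroup.mk' (AddSubgroup.zmultiples (1:ℝ))) _ _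
        _ = 0 := by rw [hsum1, sub_self]
    rw [AddCircle.coe_eq_zero_iff] at hsub
    obtain ⟨m, hm⟩ := hsub
    rw [zsmul_eq_mul, mul_one] at hm
    obtain ⟨nv, hnv⟩ := finsetBezout (Finset.univ.erase i0) b
    rw [hb] at hnv
    refine ⟨fun i => if i = i0 then 0 else x i - ((m * nv i : ℤ) : ℝ), ⟨by simp, ?_⟩, ?_⟩
    · have expand : ∀ i ∈ Finset.univ.erase i0,
          (b i:ℝ) * (if i = i0 then 0 else x i - ((m * nv i : ℤ) : ℝ))
            = (b i:ℝ) * x i - (m:ℝ) * ((b i * nv i : ℤ) : ℝ) := by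
        intro i hi
        rw [if_neg (Finset.mem_erase.1 hi).1]
        push_cast
        ring
      rw [Finset.sum_congr rfl expand, Finset.sum_sub_distrib, ← Finset.mul_sum]
      have h1 : ∑ i ∈ Finset.univ.erase i0, ((b i * nv i : ℤ) : ℝ) = (1:ℝ) := by
        exact_mod_cast congrArg (Int.cast : ℤ → ℝ) hnv
      rw [h1]
      linarith
    · refine (torusQuot_eq_of_int d x _ fun i => ?_).trans hxq
      by_cases hi : i = i0
      · subst hi
        refine ⟨0, ?_⟩
        simp [hxdef]
      · exact ⟨-(m * nv i), by rw [if_neg hi]; push_cast; ring⟩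
  · rintro ⟨x, ⟨hx0, hxs⟩, rfl⟩
    constructor
    · show ((x i0 : ℝ) : AddCircle (1:ℝ)) = 0
      rw [hx0]
      exact (QuotientAddGroup.mk' (AddSubgroup.zmultiples (1:ℝ))).map_zero
    · show ∑ i ∈ Finset.univ.erase i0, b i • ((x i : ℝ) : AddCircle (1:ℝ))
        = ((r : ℝ) : AddCircle (1:ℝ))
      rw [← coe_sum_mul, hxs]

end Aux

/-- For `d ≥ 2`, the intersection in `T^d` of the subtorus `φ({x | x 1 = 0})` with the
subtorus `φ({x | ∑ i, a i * x i = c})`, for a primitive integer vector `a` with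
`(a 2, …, a d) ≠ 0` and `c ∈ ℤ`, has exactly `gcd(a 2, …, a d)` connected components. -/
theorem card_components_inter_subtori
    (d : ℕ) (hd : 2 ≤ d) (a : Fin d → ℤ) (c : ℤ)
    (ha : Finset.univ.gcd a = 1)
    (ha' : ∃ i : Fin d, i ≠ ⟨0, by omega⟩ ∧ a i ≠ 0) :
    (Nat.card (ConnectedComponents
        ↥((torusQuot d '' {x | x ⟨0, by omega⟩ = 0}) ∩
          (torusQuot d '' {x | ∑ i, (a i : ℝ) * x i = (c : ℝ)}))) : ℤ)
      = (Finset.univ.erase (⟨0, by omega⟩ : Fin d)).gcd a := by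
  classical
  have h0d : 0 < d := by omega
  obtain ⟨j, hj0, hja⟩ := ha'
  rw [inter_eq d ⟨0, h0d⟩ a c ha]
  set i0 : Fin d := ⟨0, h0d⟩ with hi0def
  have hjE : j ∈ Finset.univ.erase i0 := Finset.mem_erase.2 ⟨hj0, Finset.mem_univ j⟩
  set E : Finset (Fin d) := Finset.univ.erase i0 with hEdef
  set g : ℤ := E.gcd a with hgdef
  have hgnn : 0 ≤ g := by
    have h1 : normalize (E.gcd a) = E.gcd a := Finset.normalize_gcd
    rw [hgdef, ← h1, ← Int.abs_eq_normalize]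
    exact abs_nonneg _
  have hgne : g ≠ 0 := by
    intro h
    exact hja (Finset.gcd_eq_zero_iff.1 (hgdef ▸ h) j hjE)
  set n : ℕ := g.toNat with hndef
  have hng : (n:ℤ) = g := Int.toNat_of_nonneg hgnn
  have hnpos : 0 < n := by
    rcases Nat.eq_zero_or_pos n with h | h
    · exact absurd (by rw [← hng, h]; rfl) hgne
    · exact h
  set b : Fin d → ℤ := fun i => a i / g with hbdef
  have hab : ∀ i ∈ E, a i = g * b i := fun i hi =>
    (Int.mul_ediv_cancel' (Finset.gcd_dvd hi)).symm
  have hbj : b j ≠ 0 := by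
    intro h
    exact hja (by rw [hab j hjE, h, mul_zero])
  have hbgcd : E.gcd b = 1 := by
    have h1 : E.gcd a = g * E.gcd b := by
      calc E.gcd a = E.gcd (fun i => g * b i) := Finset.gcd_congr rfl hab
        _ = normalize g * E.gcd b := Finset.gcd_mul_left
        _ = g * E.gcd b := by rw [Int.normalize_of_nonneg hgnn]
    have h2 : g * 1 = g * E.gcd b := by rw [mul_one, ← h1, hgdef]
    exact (mul_left_cancel₀ hgne h2).symm
  set S : Set (FlatTorus d) := {y | y i0 = 0 ∧ ∑ i ∈ E, a i • y i = 0} with hSdef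
  set F : FlatTorus d → AddCircle (1:ℝ) := fun y => ∑ i ∈ E, b i • y i with hFdef
  have hFS : ∀ y : FlatTorus d, ∑ i ∈ E, a i • y i = (n:ℤ) • F y := by
    intro y
    rw [hFdef, Finset.smul_sum]
    exact Finset.sum_congr rfl fun i hi => by rw [smul_smul, hng, ← hab i hi]
  have hFtor : ∀ y ∈ S, (n:ℤ) • F y = 0 := fun y hy => by rw [← hFS y]; exact hy.2
  set T : Set (AddCircle (1:ℝ)) := {t | (n:ℤ) • t = 0} with hTdef
  have eT : ∀ k : Fin n, torsionPt n (k : ℕ) ∈ T := fun k => torsionPt_mem n hnpos k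
  have eTbij : Function.Bijective (fun k : Fin n => (⟨torsionPt n k, eT k⟩ : ↥T)) := by
    constructor
    · intro k1 k2 h
      exact torsion_inj n hnpos k1 k2 (congrArg Subtype.val h)
    · rintro ⟨t, ht⟩
      obtain ⟨k, hk⟩ := torsion_surj n hnpos t ht
      exact ⟨k, Subtype.ext hk⟩
  haveI : Finite ↥T := Finite.of_surjective _ eTbij.2
  have hFcont : Continuous F := by
    rw [hFdef]
    exact continuous_finset_sum _ fun i _ => (continuous_apply i).zsmul (b i)
  set ψ : ↥S → ↥T := fun y => ⟨F y.1, hFtor y.1 y.2⟩ with hψdef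
  have hψcont : Continuous ψ := (hFcont.comp continuous_subtype_val).subtype_mk _
  set q : ConnectedComponents ↥S → ↥T := hψcont.connectedComponentsLift with hqdef
  have hqcoe : ∀ y : ↥S, q (ConnectedComponents.mk y) = ψ y := fun y =>
    hψcont.connectedComponentsLift_apply_coe y
  have fiberS : ∀ r : ℝ, ((r:ℝ) : AddCircle (1:ℝ)) ∈ T →
      ∀ y : FlatTorus d, y i0 = 0 → F y = ((r:ℝ) : AddCircle (1:ℝ)) → y ∈ S := by
    intro r hr y hy1 hy2
    refine ⟨hy1, ?_⟩
    rw [hFS y, hy2]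
    exact hr
  have hA : ∀ r : ℝ,
      (torusQuot d '' {x | x i0 = 0 ∧ ∑ i ∈ E, (b i:ℝ) * x i = r}).Nonempty
      ∧ IsPreconnected (torusQuot d '' {x | x i0 = 0 ∧ ∑ i ∈ E, (b i:ℝ) * x i = r}) := by
    intro r
    have hbjR : (b j : ℝ) ≠ 0 := by exact_mod_cast hbj
    have hAne : Set.Nonempty {x : Fin d → ℝ | x i0 = 0 ∧ ∑ i ∈ E, (b i:ℝ) * x i = r} := by
      refine ⟨fun i => if i = j then r / (b j:ℝ) else 0, ?_, ?_⟩
      · show (if i0 = j then r / (b j:ℝ) else 0) = 0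
        rw [if_neg (by rintro rfl; exact hj0 rfl)]
      · show ∑ i ∈ E, (b i:ℝ) * (if i = j then r / (b j:ℝ) else 0) = r
        rw [Finset.sum_eq_single_of_mem j hjE
          (fun i _ hij => by rw [if_neg hij, mul_zero])]
        rw [if_pos rfl, mul_div_cancel₀ _ hbjR]
    have hAconv : Convex ℝ {x : Fin d → ℝ | x i0 = 0 ∧ ∑ i ∈ E, (b i:ℝ) * x i = r} := by
      rintro x ⟨hx1, hx2⟩ y ⟨hy1, hy2⟩ s t hs ht hst
      constructor
      · show s • x i0 + t • y i0 = 0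
        rw [hx1, hy1, smul_zero, smul_zero, add_zero]
      · show ∑ i ∈ E, (b i:ℝ) * (s • x i + t • y i) = r
        have hexp : ∀ i ∈ E, (b i:ℝ) * (s • x i + t • y i)
            = s * ((b i:ℝ) * x i) + t * ((b i:ℝ) * y i) := by
          intro i _
          simp only [smul_eq_mul]
          ring
        rw [Finset.sum_congr rfl hexp, Finset.sum_add_distrib, ← Finset.mul_sum,
          ← Finset.mul_sum, hx2, hy2, ← add_mul, hst, one_mul]
    exact ⟨hAne.image _, (hAconv.isPreconnected).image _ (continuous_torusQuot d).continuousOn⟩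
  have hqsurj : Function.Surjective q := by
    rintro ⟨t, ht⟩
    obtain ⟨k, hk⟩ := torsion_surj n hnpos t ht
    set r : ℝ := ((k:ℕ):ℝ)/n with hrdef
    have hrt : ((r:ℝ) : AddCircle (1:ℝ)) = t := hk
    have hrT : ((r:ℝ) : AddCircle (1:ℝ)) ∈ T := by rw [hrt]; exact ht
    obtain ⟨y0, hy0⟩ := (hA r).1
    have hy0fib : y0 ∈ {y : FlatTorus d | y i0 = 0 ∧
        ∑ i ∈ E, b i • y i = ((r:ℝ) : AddCircle (1:ℝ))} := by
      rw [hEdef, fiber_eq d i0 b hbgcd r]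
      exact hy0
    have hy0S : y0 ∈ S := fiberS r hrT y0 hy0fib.1 hy0fib.2
    refine ⟨ConnectedComponents.mk ⟨y0, hy0S⟩, ?_⟩
    rw [hqcoe]
    exact Subtype.ext (by show F y0 = t; rw [← hrt]; exact hy0fib.2)
  have hqinj : Function.Injective q := by
    intro u1 u2 he
    obtain ⟨y1, rfl⟩ := ConnectedComponents.surjective_coe u1
    obtain ⟨y2, rfl⟩ := ConnectedComponents.surjective_coe u2
    rw [hqcoe, hqcoe] at he
    obtain ⟨k, hk⟩ := torsion_surj n hnpos (F y1.1) (hFtor y1.1 y1.2)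
    set r : ℝ := ((k:ℕ):ℝ)/n with hrdef
    have hr1 : F y1.1 = ((r:ℝ) : AddCircle (1:ℝ)) := hk.symm
    have hr2 : F y2.1 = ((r:ℝ) : AddCircle (1:ℝ)) := by
      have h : F y1.1 = F y2.1 := congrArg Subtype.val he
      rw [← h]
      exact hr1
    have hrT : ((r:ℝ) : AddCircle (1:ℝ)) ∈ T := by rw [← hr1]; exact hFtor y1.1 y1.2
    set P : Set ↥S := {y : ↥S | F y.1 = ((r:ℝ) : AddCircle (1:ℝ))} with hPdef
    have hval : Subtype.val '' P = {y : FlatTorus d | y i0 = 0 ∧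
        ∑ i ∈ E, b i • y i = ((r:ℝ) : AddCircle (1:ℝ))} := by
      ext y
      constructor
      · rintro ⟨⟨y, hyS⟩, hyP, rfl⟩
        exact ⟨hyS.1, hyP⟩
      · intro hy
        exact ⟨⟨y, fiberS r hrT y hy.1 hy.2⟩, hy.2, rfl⟩
    have hPconn : IsPreconnected P := by
      rw [← Topology.IsInducing.subtypeVal.isPreconnected_image (s := P), hval, hEdef,
        fiber_eq d i0 b hbgcd r]
      exact (hA r).2
    have h1 : y1 ∈ P := hr1
    have h2 : y2 ∈ P := hr2
    have hmem := (hPconn.subset_connectedComponent h1) h2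
    exact ConnectedComponents.coe_eq_coe.2 (connectedComponent_eq hmem)
  have hcard : Nat.card (ConnectedComponents ↥S) = n := by
    rw [Nat.card_congr (Equiv.ofBijective q ⟨hqinj, hqsurj⟩),
      ← Nat.card_congr (Equiv.ofBijective _ eTbij), Nat.card_eq_fintype_card, Fintype.card_fin]
  rw [hcard]
  exact hng

end
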